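/- Let C be a commutative Hopf algebra over a 2-torsion free ring k which is k-flat, let g be a Lie superalgebra with g₀ ⊆ k-flat and odd part a left C-comodule via v ↦ Σᵢ cᵢ⊗vᵢ, such that the super-bracket g₁⊗g₁ → g₀ is C-colinear. Then the coaction of the unique half-square satisfies ρ((1/2)[v,v]) = Σᵢ cᵢ² ⊗ (1/2)[vᵢ,vᵢ] + Σ_{i<j} cᵢcⱼ ⊗ [vᵢ,vⱼ], and consequently the element v² − (1/2)[v,v] generates a C-costable submodule: ρ(v² − (1/2)[v,v]) = Σᵢ cᵢ² ⊗ (vᵢ² − (1/2)[vᵢ,vᵢ]) + Σ_{i<j} cᵢcⱼ ⊗ (vᵢvⱼ + vⱼvᵢ − [vᵢ,vⱼ]) in C ⊗ H, where H = J ⋉ T(g₁). -/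

import Mathlib

open TensorProduct

private lemma sum_split19 {M : Type*} [AddCommMonoid M] {n : ℕ} (f : Fin n → Fin n → M) :
    ∑ i, ∑ j, f i j =
      ((∑ i, f i i) + ∑ i, ∑ j ∈ Finset.univ.filter (fun j => i < j), f i j)
        + ∑ i, ∑ j ∈ Finset.univ.filter (fun j => i < j), f j i := by
  have hd : ∑ i : Fin n, f i i = ∑ i : Fin n, ∑ j : Fin n, if j = i then f i j else 0 := by
    simp
  have h2 : ∑ i : Fin n, ∑ j ∈ Finset.univ.filter (fun j => i < j), f i j
      = ∑ i : Fin n, ∑ j : Fin n, if i < j then f i j else 0 := by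
    simp [Finset.sum_filter]
  have h3 : ∑ i : Fin n, ∑ j ∈ Finset.univ.filter (fun j => i < j), f j i
      = ∑ i : Fin n, ∑ j : Fin n, if j < i then f i j else 0 := by
    rw [show (∑ i : Fin n, ∑ j ∈ Finset.univ.filter (fun j => i < j), f j i)
        = ∑ i : Fin n, ∑ j : Fin n, if i < j then f j i else 0 by simp [Finset.sum_filter]]
    rw [Finset.sum_comm]
  rw [hd, h2, h3, ← Finset.sum_add_distrib, ← Finset.sum_add_distrib]
  refine Finset.sum_congr rfl fun i _ => ?_
  rw [← Finset.sum_add_distrib, ← Finset.sum_add_distrib]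
  refine Finset.sum_congr rfl fun j _ => ?_
  rcases lt_trichotomy i j with hij | hij | hij
  · simp [hij, hij.ne', (not_lt_of_gt hij)]
  · simp [hij]
  · simp [hij, hij.ne, (not_lt_of_gt hij)]

private lemma two_tf19 {k M : Type*} [CommRing k] [AddCommGroup M] [Module k M]
    [Module.Flat k M] (h2k : ∀ a : k, 2 * a = 0 → a = 0) (m : M) (hm : (2 : k) • m = 0) :
    m = 0 := by
  have hf : Function.Injective (LinearMap.lsmul k k 2) := by
    intro a a' hab
    simp only [LinearMap.lsmul_apply, smul_eq_mul] at hab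
    have := h2k (a - a') (by rw [mul_sub, hab, sub_self])
    exact sub_eq_zero.mp this
  have hinj := Module.Flat.rTensor_preserves_injective_linearMap
    (M := M) (LinearMap.lsmul k k 2) hf
  have h0 : ((LinearMap.lsmul k k 2).rTensor M) ((1 : k) ⊗ₜ m) = ((LinearMap.lsmul k k 2).rTensor M) 0 := by
    rw [LinearMap.rTensor_tmul, map_zero]
    simp only [LinearMap.lsmul_apply, smul_eq_mul, mul_one]
    rw [show (2 : k) ⊗ₜ[k] m = (1 : k) ⊗ₜ[k] ((2:k) • m) by rw [tmul_smul, smul_tmul']; norm_num, hm, tmul_zero]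
  have := hinj h0
  have := congrArg (TensorProduct.lid k M) this
  simpa using this

/-- Coaction formula for half-squares.  k is 2-torsion free, C = O(G) is a
k-flat commutative Hopf algebra, g₀ = L is k-flat, and the odd part V is a
left C-comodule via ρ1 with the super-bracket b : V ⊗ V → L C-colinear.
Then for ρ1 v = Σᵢ cᵢ ⊗ vᵢ one has
ρ0((1/2)[v,v]) = Σᵢ cᵢ² ⊗ (1/2)[vᵢ,vᵢ] + Σ_{i<j} cᵢcⱼ ⊗ [vᵢ,vⱼ], and in
H = J ⋉ T(g₁) the element v² − (1/2)[v,v] generates a C-costable submodule: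
ρ(v² − (1/2)[v,v]) = Σᵢ cᵢ² ⊗ (vᵢ² − (1/2)[vᵢ,vᵢ])
  + Σ_{i<j} cᵢcⱼ ⊗ (vᵢvⱼ + vⱼvᵢ − [vᵢ,vⱼ]). -/
theorem stmt19 (k C L V H : Type*) [CommRing k]
    (h2k : ∀ a : k, 2 * a = 0 → a = 0)
    [CommRing C] [HopfAlgebra k C] [Module.Flat k C]
    [AddCommGroup L] [Module k L] [Module.Flat k L]
    [AddCommGroup V] [Module k V]
    [Ring H] [Algebra k H]
    -- the super-bracket on the odd part, and the unique half of [v,v]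
    (b : V →ₗ[k] V →ₗ[k] L) (hsym : ∀ v w : V, b v w = b w v)
    (h : V → L) (hhalf : ∀ v : V, (2 : k) • h v = b v v)
    -- left C-comodule structures on g₀ = L and g₁ = V
    (ρ0 : L →ₗ[k] C ⊗[k] L) (ρ1 : V →ₗ[k] C ⊗[k] V)
    -- the super-bracket g₁ ⊗ g₁ → g₀ is C-colinear
    (hcolin : ρ0 ∘ₗ TensorProduct.lift b =
      (TensorProduct.map (LinearMap.mul' k C) (TensorProduct.lift b)) ∘ₗ
        (TensorProduct.tensorTensorTensorComm k C V C V).toLinearMap ∘ₗ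
          (TensorProduct.map ρ1 ρ1))
    -- H = J ⋉ T(g₁), a C-comodule algebra containing L (via jι) and V (via vι)
    (jι : L →ₗ[k] H) (vι : V →ₗ[k] H)
    (ρH : H →ₗ[k] C ⊗[k] H)
    (hρH1 : ρH 1 = 1 ⊗ₜ 1)
    (hρHmul : ∀ x y : H, ρH (x * y) = ρH x * ρH y)
    (hρHj : ∀ u : L, ρH (jι u) = (LinearMap.lTensor C jι) (ρ0 u))
    (hρHv : ∀ v : V, ρH (vι v) = (LinearMap.lTensor C vι) (ρ1 v)) :
    ∀ (n : ℕ) (c : Fin n → C) (vv : Fin n → V) (v : V),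
      ρ1 v = ∑ i, c i ⊗ₜ vv i →
      -- the coaction of the half-square
      (ρ0 (h v) =
        (∑ i, (c i * c i) ⊗ₜ h (vv i)) +
          ∑ i, ∑ j ∈ Finset.univ.filter (fun j => i < j),
            (c i * c j) ⊗ₜ b (vv i) (vv j)) ∧
      -- consequently v² − (1/2)[v,v] generates a C-costable submodule of H
      (ρH (vι v * vι v - jι (h v)) =
        (∑ i, (c i * c i) ⊗ₜ (vι (vv i) * vι (vv i) - jι (h (vv i)))) +
          ∑ i, ∑ j ∈ Finset.univ.filter (fun j => i < j),
            (c i * c j) ⊗ₜ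
              (vι (vv i) * vι (vv j) + vι (vv j) * vι (vv i) - jι (b (vv i) (vv j)))) := by
  intro n c vv v hρ
  have hkey : ρ0 ((b v) v) = ∑ i, ∑ j, (c i * c j) ⊗ₜ[k] ((b (vv i)) (vv j)) := by
    have h0 := LinearMap.congr_fun hcolin (v ⊗ₜ[k] v)
    simp only [LinearMap.comp_apply, TensorProduct.lift.tmul, TensorProduct.map_tmul,
      LinearEquiv.coe_coe] at h0
    rw [hρ] at h0
    rw [h0, TensorProduct.sum_tmul]
    simp only [TensorProduct.tmul_sum, map_sum, TensorProduct.tensorTensorTensorComm_tmul,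
      TensorProduct.map_tmul, LinearMap.mul'_apply, TensorProduct.lift.tmul]
  have hswap : ∀ i j : Fin n, (c j * c i) ⊗ₜ[k] ((b (vv j)) (vv i))
      = (c i * c j) ⊗ₜ[k] ((b (vv i)) (vv j)) := fun i j => by rw [mul_comm, hsym]
  set R : C ⊗[k] L := (∑ i, (c i * c i) ⊗ₜ h (vv i)) +
      ∑ i, ∑ j ∈ Finset.univ.filter (fun j => i < j), (c i * c j) ⊗ₜ b (vv i) (vv j) with hR
  have hdouble : (2:k) • ρ0 (h v) = (2:k) • R := by
    rw [← map_smul, hhalf, hkey,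
      sum_split19 (fun i j => (c i * c j) ⊗ₜ[k] ((b (vv i)) (vv j))), hR, smul_add]
    have hA : (2:k) • (∑ i, (c i * c i) ⊗ₜ[k] h (vv i))
        = ∑ i, (c i * c i) ⊗ₜ[k] ((b (vv i)) (vv i)) := by
      rw [Finset.smul_sum]
      exact Finset.sum_congr rfl fun i _ => by rw [← tmul_smul, hhalf]
    have hB : ∑ i, ∑ j ∈ Finset.univ.filter (fun j => i < j), (c j * c i) ⊗ₜ[k] ((b (vv j)) (vv i))
        = ∑ i, ∑ j ∈ Finset.univ.filter (fun j => i < j), (c i * c j) ⊗ₜ[k] ((b (vv i)) (vv j)) :=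
      Finset.sum_congr rfl fun i _ => Finset.sum_congr rfl fun j _ => hswap i j
    rw [hA, two_smul, hB]
    abel
  have part1 : ρ0 (h v) = R := by
    have := two_tf19 h2k (ρ0 (h v) - R) (by rw [smul_sub, hdouble, sub_self])
    exact sub_eq_zero.mp this
  refine ⟨part1, ?_⟩
  have hv2 : ρH (vι v * vι v) = ∑ i, ∑ j, (c i * c j) ⊗ₜ[k] (vι (vv i) * vι (vv j)) := by
    rw [hρHmul, hρHv, hρ, map_sum]
    simp only [LinearMap.lTensor_tmul]
    rw [Finset.sum_mul]
    exact Finset.sum_congr rfl fun i _ => by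
      rw [Finset.mul_sum]
      exact Finset.sum_congr rfl fun j _ => by rw [Algebra.TensorProduct.tmul_mul_tmul]
  have hj : ρH (jι (h v)) = (∑ i, (c i * c i) ⊗ₜ[k] jι (h (vv i))) +
      ∑ i, ∑ j ∈ Finset.univ.filter (fun j => i < j),
        (c i * c j) ⊗ₜ[k] jι ((b (vv i)) (vv j)) := by
    rw [hρHj, part1, hR]
    simp only [map_add, map_sum, LinearMap.lTensor_tmul]
  rw [map_sub, hv2, hj,
    sum_split19 (fun i j => (c i * c j) ⊗ₜ[k] (vι (vv i) * vι (vv j)))]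
  have hBH : ∑ i, ∑ j ∈ Finset.univ.filter (fun j => i < j),
        (c j * c i) ⊗ₜ[k] (vι (vv j) * vι (vv i))
      = ∑ i, ∑ j ∈ Finset.univ.filter (fun j => i < j),
        (c i * c j) ⊗ₜ[k] (vι (vv j) * vι (vv i)) :=
    Finset.sum_congr rfl fun i _ => Finset.sum_congr rfl fun j _ => by rw [mul_comm (c j)]
  simp only [tmul_sub, tmul_add, Finset.sum_sub_distrib, Finset.sum_add_distrib]
  rw [hBH]
  abel
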